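/- arXiv:1709.02267 — 2 statements merged into one kernel-verified Lean document; each statement's English description precedes it below -/
import Mathlib

section
/- Let A ⊆ ℝ² be a Jordan domain with Lipschitz-regular boundary, let i ∈ {1,2} (with B¹ = A, B² = A*), let r₀ > 0, and let F : ℝ² → ℝ² be measurable and continuous on B^i ∩ (∂A)_{⊕r₀}. Then for H¹-almost every q ∈ ∂A and every s ∈ [−1,1], r⁻¹ G^i_{r,D}(s,q) → (−1)^i · 2√(1−s²) · (F(q)·u_A(q)) as r ↓ 0. -/
open MeasureTheory Filter Set Metric

noncomputable section

abbrev V2 : Type := EuclideanSpace ℝ (Fin 2)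

/-- The unit vector `(cos θ, sin θ)`. -/
def uvec (θ : ℝ) : V2 := !₂[Real.cos θ, Real.sin θ]

/-- The unit vector `(-sin θ, cos θ)`, perpendicular to `uvec θ`. -/
def uperp (θ : ℝ) : V2 := !₂[-Real.sin θ, Real.cos θ]

/-- The counterclockwise perpendicular `x^⊥ = (-x₂, x₁)`. -/
def perpv (v : V2) : V2 := !₂[-(v 1), v 0]

/-- The tangent cone of `S` at `p`. -/
def TanCone (S : Set V2) (p : V2) : Set V2 :=
  {v | ∃ ps : ℕ → V2, (∀ n, ps n ∈ S \ {p}) ∧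
    Tendsto ps atTop (nhds p) ∧
    Tendsto (fun n => ‖ps n - p‖⁻¹ • (ps n - p)) atTop (nhds (‖v‖⁻¹ • v))}

/-- The normal cone of `S` at `p`. -/
def NorCone (S : Set V2) (p : V2) : Set V2 :=
  {u | ∀ v ∈ TanCone S p, (inner ℝ u v : ℝ) ≤ 0}

/-- `C` is a Jordan curve. -/
def IsJordanCurve (C : Set V2) : Prop :=
  C.Nonempty ∧ ∃ φ : ℝ → V2, ContinuousOn φ (Icc 0 1) ∧ InjOn φ (Ioo 0 1) ∧
    φ 0 = φ 1 ∧ φ '' Icc 0 1 = C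

/-- `A` is a Jordan domain. -/
def IsJordanDomain (A : Set V2) : Prop :=
  IsCompact A ∧ IsConnected (interior A) ∧ IsJordanCurve (frontier A)

/-- `q` is a regular boundary point of `A`, with outward unit normal `uA q`. -/
def RegularAt (A : Set V2) (uA : V2 → V2) (q : V2) : Prop :=
  ‖uA q‖ = 1 ∧ (∀ v ∈ TanCone (frontier A) q, (inner ℝ (uA q) v : ℝ) = 0) ∧
  NorCone A q = {w | ∃ l : ℝ, 0 ≤ l ∧ w = l • uA q} ∧
  NorCone (closure Aᶜ) q = {w | ∃ l : ℝ, 0 ≤ l ∧ w = -(l • uA q)}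

/-- The Jordan domain `A` has Lipschitz-regular boundary, with outward unit
normal field `uA` (set to `0` at the `H¹`-null set of irregular points). -/
def LipschitzRegular (A : Set V2) (uA : V2 → V2) : Prop :=
  (∃ (K : NNReal) (φ : ℝ → V2), LipschitzOnWith K φ (Icc 0 1) ∧ InjOn φ (Ioo 0 1) ∧
    φ 0 = φ 1 ∧ φ '' Icc 0 1 = frontier A) ∧
  (∀ q ∈ frontier A, RegularAt A uA q ∨ uA q = 0) ∧
  μH[1] {q | q ∈ frontier A ∧ ¬ RegularAt A uA q} = 0

/-- `B¹ = A`, `B² = A* = closure Aᶜ`. -/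
def Bset (A : Set V2) (i : ℕ) : Set V2 := if i = 1 then A else closure Aᶜ

/-- The circle flux `G^i_{r,D}(s,q)`. -/
def GD (A : Set V2) (uA : V2 → V2) (F : V2 → V2) (i : ℕ) (r s : ℝ) (q : V2) : ℝ :=
  r * ∫ θ in (0:ℝ)..(2 * Real.pi),
    (Bset A i).indicator (fun x => (inner ℝ (F x) (uvec θ) : ℝ))
      (q + (r * s) • uA q + r • uvec θ)

/-- The circle circulation `G^i_{r,C}(s,q)`. -/
def GC (A : Set V2) (uA : V2 → V2) (F : V2 → V2) (i : ℕ) (r s : ℝ) (q : V2) : ℝ :=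
  r * ∫ θ in (0:ℝ)..(2 * Real.pi),
    (Bset A i).indicator (fun x => (inner ℝ (F x) (uperp θ) : ℝ))
      (q + (r * s) • uA q + r • uvec θ)

end

lemma uvec_norm (θ : ℝ) : ‖uvec θ‖ = 1 := by
  rw [EuclideanSpace.norm_eq]
  simp only [uvec, Fin.sum_univ_two, Matrix.cons_val_zero, Matrix.cons_val_one, Matrix.head_cons,
    Real.norm_eq_abs, sq_abs]
  rw [Real.cos_sq_add_sin_sq]; exact Real.sqrt_one

lemma inner_uvec_uvec (α θ : ℝ) : (inner ℝ (uvec α) (uvec θ) : ℝ) = Real.cos (θ - α) := by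
  simp only [uvec, PiLp.inner_apply, Fin.sum_univ_two, Matrix.cons_val_zero, Matrix.cons_val_one,
    Matrix.head_cons, RCLike.inner_apply, conj_trivial, Real.cos_sub]

lemma inner_uvec_expand (f : V2) (θ : ℝ) :
    (inner ℝ f (uvec θ) : ℝ) = f 0 * Real.cos θ + f 1 * Real.sin θ := by
  simp only [uvec, PiLp.inner_apply, Fin.sum_univ_two, Matrix.cons_val_zero, Matrix.cons_val_one,
    Matrix.head_cons, RCLike.inner_apply, conj_trivial]
  ring

lemma uvec_add (ψ α : ℝ) : uvec (ψ + α) = Real.cos ψ • uvec α + Real.sin ψ • uperp α := by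
  ext i
  fin_cases i <;>
    simp [uvec, uperp, Real.cos_add, Real.sin_add] <;> ring

lemma exists_angle {a b : ℝ} (h : a ^ 2 + b ^ 2 = 1) :
    ∃ α, Real.cos α = a ∧ Real.sin α = b := by
  have ha1 : -1 ≤ a := by nlinarith
  have ha2 : a ≤ 1 := by nlinarith
  have hb2 : 1 - a ^ 2 = b ^ 2 := by ring_nf; linarith
  rcases le_or_gt 0 b with hb | hb
  · exact ⟨Real.arccos a, Real.cos_arccos ha1 ha2, by
      rw [Real.sin_arccos, hb2, Real.sqrt_sq hb]⟩
  · refine ⟨-Real.arccos a, by rw [Real.cos_neg, Real.cos_arccos ha1 ha2], ?_⟩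
    rw [Real.sin_neg, Real.sin_arccos, hb2, Real.sqrt_sq_eq_abs, abs_of_neg hb, neg_neg]

lemma unit_eq_uvec {u : V2} (hu : ‖u‖ = 1) : ∃ α, u = uvec α := by
  have h : u 0 ^ 2 + u 1 ^ 2 = 1 := by
    have := hu
    rw [EuclideanSpace.norm_eq] at this
    simp only [Fin.sum_univ_two, Real.norm_eq_abs, sq_abs] at this
    exact Real.sqrt_eq_one.mp this
  obtain ⟨α, hc, hs⟩ := exists_angle h
  refine ⟨α, ?_⟩
  ext i
  fin_cases i <;> simp [uvec, hc, hs]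

lemma null_level (α c : ℝ) : volume {θ : ℝ | Real.cos (θ - α) = c} = 0 := by
  by_cases hex : ∃ θ₀, Real.cos (θ₀ - α) = c
  · obtain ⟨θ₀, h₀⟩ := hex
    have hsub : {θ : ℝ | Real.cos (θ - α) = c} ⊆
        ⋃ k : ℤ, ({2 * k * Real.pi + θ₀, 2 * k * Real.pi + 2 * α - θ₀} : Set ℝ) := by
      intro θ hθ
      have : Real.cos (θ₀ - α) = Real.cos (θ - α) := by rw [h₀, hθ]
      rw [Real.cos_eq_cos_iff] at this
      obtain ⟨k, hk | hk⟩ := this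
      · exact mem_iUnion.mpr ⟨k, by simp only [mem_insert_iff, mem_singleton_iff]; exact Or.inl (by linarith)⟩
      · exact mem_iUnion.mpr ⟨k, by simp only [mem_insert_iff, mem_singleton_iff]; exact Or.inr (by linarith)⟩
    refine measure_mono_null hsub ?_
    refine measure_iUnion_null fun k => ?_
    exact measure_union_null (measure_singleton _) (measure_singleton _)
  · push_neg at hex
    have : {θ : ℝ | Real.cos (θ - α) = c} = ∅ := eq_empty_iff_forall_notMem.mpr hex
    simp [this]

lemma intervalIntegrable_of_bounded {f : ℝ → ℝ} {C : ℝ} (hm : Measurable f)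
    (hb : ∀ x, |f x| ≤ C) (a b : ℝ) : IntervalIntegrable f volume a b := by
  rw [intervalIntegrable_iff]
  refine Integrable.mono' (integrableOn_const measure_Ioc_lt_top.ne)
    hm.aestronglyMeasurable.restrict (ae_of_all _ fun x => by simpa using hb x)

open Real in
lemma integral_sin_cutoff (s : ℝ) :
    ∫ ψ in (-π)..π, (if -s < Real.cos ψ then Real.sin ψ else 0) = 0 := by
  have h := intervalIntegral.integral_comp_neg (a := -π) (b := π)
    (f := fun ψ => if -s < Real.cos ψ then Real.sin ψ else 0)
  simp only [neg_neg] at h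
  have heq : (fun x : ℝ => if -s < Real.cos (-x) then Real.sin (-x) else 0) =
      (fun x : ℝ => -(if -s < Real.cos x then Real.sin x else 0)) := by
    funext x
    simp only [Real.cos_neg, Real.sin_neg]
    split_ifs <;> simp
  rw [heq, intervalIntegral.integral_neg] at h
  linarith

open Real in
lemma integral_cos_cutoff {s : ℝ} (hs : s ∈ Set.Icc (-1:ℝ) 1) :
    ∫ ψ in (-π)..π, (if -s < Real.cos ψ then Real.cos ψ else 0) = 2 * Real.sqrt (1 - s^2) := by
  set β := Real.arccos (-s) with hβ
  have hβ0 : 0 ≤ β := Real.arccos_nonneg _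
  have hβπ : β ≤ π := Real.arccos_le_pi _
  have hcosβ : Real.cos β = -s := Real.cos_arccos (by linarith [hs.2]) (by linarith [hs.1])
  have hsinβ : Real.sin β = Real.sqrt (1 - s^2) := by
    rw [hβ, Real.sin_arccos]; congr 1; ring
  set h : ℝ → ℝ := fun ψ => if -s < Real.cos ψ then Real.cos ψ else 0 with hh
  have hmeas : Measurable h := Measurable.ite
    (measurableSet_lt measurable_const Real.measurable_cos) Real.measurable_cos measurable_const
  have hbd : ∀ x, |h x| ≤ 1 := by
    intro x; rw [hh]; dsimp only
    split_ifs
    · exact Real.abs_cos_le_one x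
    · simp
  have hint : ∀ a b : ℝ, IntervalIntegrable h volume a b :=
    intervalIntegrable_of_bounded hmeas hbd
  -- the two outer pieces vanish
  have h1 : ∫ ψ in (-π)..(-β), h ψ = 0 := by
    rw [intervalIntegral.integral_congr (g := fun _ => (0:ℝ)) ?_, intervalIntegral.integral_zero]
    intro x hx
    rw [Set.uIcc_of_le (by linarith)] at hx
    have hx1 : -π ≤ x := hx.1
    have hx2 : x ≤ -β := hx.2
    have : Real.cos x ≤ -s := by
      rw [← Real.cos_neg x, ← hcosβ]
      exact Real.cos_le_cos_of_nonneg_of_le_pi hβ0 (by linarith) (by linarith)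
    simp only [hh]; rw [if_neg (not_lt.mpr this)]
  have h3 : ∫ ψ in β..π, h ψ = 0 := by
    rw [intervalIntegral.integral_congr (g := fun _ => (0:ℝ)) ?_, intervalIntegral.integral_zero]
    intro x hx
    rw [Set.uIcc_of_le (by linarith)] at hx
    have : Real.cos x ≤ -s := by
      rw [← hcosβ]
      exact Real.cos_le_cos_of_nonneg_of_le_pi hβ0 hx.2 hx.1
    simp only [hh]; rw [if_neg (not_lt.mpr this)]
  have h2 : ∫ ψ in (-β)..β, h ψ = 2 * Real.sqrt (1 - s^2) := by
    have hcongr : ∀ᵐ x ∂(volume : Measure ℝ), x ∈ Set.uIoc (-β) β → h x = Real.cos x := by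
      have hnull : ∀ᵐ x ∂(volume : Measure ℝ), Real.cos (x - 0) ≠ -s := by
        rw [ae_iff]
        convert null_level 0 (-s) using 2
        simp
      filter_upwards [hnull] with x hx hmem
      rw [Set.uIoc_of_le (by linarith)] at hmem
      simp only [sub_zero] at hx
      have h1 : Real.cos β ≤ Real.cos x := by
        rcases le_or_gt 0 x with h0 | h0
        · exact Real.cos_le_cos_of_nonneg_of_le_pi h0 hβπ hmem.2
        · rw [← Real.cos_neg x]
          exact Real.cos_le_cos_of_nonneg_of_le_pi (by linarith) hβπ (by linarith [hmem.1])
      have : -s < Real.cos x := lt_of_le_of_ne (hcosβ ▸ h1) (Ne.symm hx)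
      simp only [hh]; rw [if_pos this]
    rw [intervalIntegral.integral_congr_ae hcongr, integral_cos, hsinβ, Real.sin_neg, hsinβ]
    ring
  have hsplit : ∫ ψ in (-π)..π, h ψ =
      (∫ ψ in (-π)..(-β), h ψ) + (∫ ψ in (-β)..β, h ψ) + (∫ ψ in β..π, h ψ) := by
    rw [intervalIntegral.integral_add_adjacent_intervals (hint _ _) (hint _ _),
      intervalIntegral.integral_add_adjacent_intervals (hint _ _) (hint _ _)]
  rw [hsplit, h1, h2, h3]; ring
open Real in
lemma key_integral {s : ℝ} (hs : s ∈ Set.Icc (-1:ℝ) 1) (α : ℝ) (f : V2) :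
    ∫ θ in (0:ℝ)..(2*π), (if -s < Real.cos (θ - α) then (inner ℝ f (uvec θ) : ℝ) else 0)
      = 2 * Real.sqrt (1 - s^2) * (inner ℝ f (uvec α) : ℝ) := by
  set g : ℝ → ℝ := fun θ => if -s < Real.cos (θ - α) then (inner ℝ f (uvec θ) : ℝ) else 0 with hg
  have huvec_per : ∀ θ : ℝ, uvec (θ + 2*π) = uvec θ := by
    intro θ; ext i; fin_cases i <;> simp [uvec, Real.cos_add_two_pi, Real.sin_add_two_pi]
  have hper : Function.Periodic g (2*π) := by
    intro θ
    simp only [hg]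
    rw [show θ + 2*π - α = (θ - α) + 2*π by ring, Real.cos_add_two_pi, huvec_per]
  have h1 : ∫ θ in (0:ℝ)..(2*π), g θ = ∫ θ in (α-π)..(α+π), g θ := by
    have := hper.intervalIntegral_add_eq 0 (α-π)
    rw [zero_add, show α - π + 2*π = α + π by ring] at this
    exact this
  have h2 : ∫ θ in (α-π)..(α+π), g θ = ∫ x in (-π)..π, g (x + α) := by
    rw [intervalIntegral.integral_comp_add_right g α, show -π + α = α - π by ring,
      show π + α = α + π by ring]
  set P : ℝ := (inner ℝ f (uvec α) : ℝ) with hP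
  set Q : ℝ := (inner ℝ f (uperp α) : ℝ) with hQ
  have h3 : ∀ x : ℝ, g (x + α) = P * (if -s < Real.cos x then Real.cos x else 0)
      + Q * (if -s < Real.cos x then Real.sin x else 0) := by
    intro x
    have hinner : (inner ℝ f (uvec (x + α)) : ℝ) = Real.cos x * P + Real.sin x * Q := by
      rw [uvec_add, inner_add_right, real_inner_smul_right, real_inner_smul_right]
    simp only [hg, show x + α - α = x by ring, hinner]
    split_ifs <;> ring
  have hintc : IntervalIntegrable (fun x => if -s < Real.cos x then Real.cos x else 0)
      volume (-π) π := by
    refine intervalIntegrable_of_bounded (Measurable.ite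
      (measurableSet_lt measurable_const Real.measurable_cos) Real.measurable_cos
      measurable_const) (C := 1) (fun x => ?_) _ _
    split_ifs
    · exact Real.abs_cos_le_one x
    · simp
  have hints : IntervalIntegrable (fun x => if -s < Real.cos x then Real.sin x else 0)
      volume (-π) π := by
    refine intervalIntegrable_of_bounded (Measurable.ite
      (measurableSet_lt measurable_const Real.measurable_cos) Real.measurable_sin
      measurable_const) (C := 1) (fun x => ?_) _ _
    split_ifs
    · exact Real.abs_sin_le_one x
    · simp
  rw [h1, h2]
  calc ∫ x in (-π)..π, g (x + α)
      = ∫ x in (-π)..π, (P * (if -s < Real.cos x then Real.cos x else 0)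
        + Q * (if -s < Real.cos x then Real.sin x else 0)) := by
        exact intervalIntegral.integral_congr fun x _ => h3 x
    _ = P * (∫ x in (-π)..π, (if -s < Real.cos x then Real.cos x else 0))
        + Q * (∫ x in (-π)..π, (if -s < Real.cos x then Real.sin x else 0)) := by
        rw [intervalIntegral.integral_add (hintc.const_mul P) (hints.const_mul Q),
          intervalIntegral.integral_const_mul, intervalIntegral.integral_const_mul]
    _ = 2 * Real.sqrt (1 - s^2) * P := by
        rw [integral_cos_cutoff hs, integral_sin_cutoff]; ring

open Real in
lemma integral_inner_uvec (f : V2) :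
    ∫ θ in (0:ℝ)..(2*π), (inner ℝ f (uvec θ) : ℝ) = 0 := by
  have : ∀ θ : ℝ, (inner ℝ f (uvec θ) : ℝ) = f 0 * Real.cos θ + f 1 * Real.sin θ :=
    inner_uvec_expand f
  rw [intervalIntegral.integral_congr (g := fun θ => f 0 * Real.cos θ + f 1 * Real.sin θ)
    (fun x _ => this x)]
  rw [intervalIntegral.integral_add ((Real.continuous_cos.intervalIntegrable _ _).const_mul _)
    ((Real.continuous_sin.intervalIntegrable _ _).const_mul _),
    intervalIntegral.integral_const_mul, intervalIntegral.integral_const_mul,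
    integral_cos, integral_sin]
  simp [Real.sin_two_pi, Real.cos_two_pi]

open Real in
lemma key_integral' {s : ℝ} (hs : s ∈ Set.Icc (-1:ℝ) 1) (α : ℝ) (f : V2) :
    ∫ θ in (0:ℝ)..(2*π), (if Real.cos (θ - α) < -s then (inner ℝ f (uvec θ) : ℝ) else 0)
      = -(2 * Real.sqrt (1 - s^2) * (inner ℝ f (uvec α) : ℝ)) := by
  have hXint : IntervalIntegrable (fun θ => (inner ℝ f (uvec θ) : ℝ)) volume 0 (2*π) := by
    refine Continuous.intervalIntegrable ?_ _ _
    have : (fun θ => (inner ℝ f (uvec θ) : ℝ)) = fun θ => f 0 * Real.cos θ + f 1 * Real.sin θ :=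
      funext (inner_uvec_expand f)
    rw [this]; fun_prop
  have hbound : ∀ θ : ℝ, |(inner ℝ f (uvec θ) : ℝ)| ≤ ‖f‖ := by
    intro θ
    calc |(inner ℝ f (uvec θ) : ℝ)| ≤ ‖f‖ * ‖uvec θ‖ := abs_real_inner_le_norm f (uvec θ)
      _ = ‖f‖ := by rw [uvec_norm, mul_one]
  have hmeasX : Measurable fun θ => (inner ℝ f (uvec θ) : ℝ) := by
    have : (fun θ => (inner ℝ f (uvec θ) : ℝ)) = fun θ => f 0 * Real.cos θ + f 1 * Real.sin θ :=
      funext (inner_uvec_expand f)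
    rw [this]; fun_prop
  have hite_int : IntervalIntegrable
      (fun θ => if -s ≤ Real.cos (θ - α) then (inner ℝ f (uvec θ) : ℝ) else 0) volume 0 (2*π) := by
    refine intervalIntegrable_of_bounded (Measurable.ite
      (measurableSet_le measurable_const (Real.measurable_cos.comp (by fun_prop)))
      hmeasX measurable_const) (C := ‖f‖) (fun x => ?_) _ _
    split_ifs
    · exact hbound x
    · simp
  have hpt : ∀ θ : ℝ, (if Real.cos (θ - α) < -s then (inner ℝ f (uvec θ) : ℝ) else 0)
      = (inner ℝ f (uvec θ) : ℝ)
        - (if -s ≤ Real.cos (θ - α) then (inner ℝ f (uvec θ) : ℝ) else 0) := by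
    intro θ
    rcases lt_or_ge (Real.cos (θ - α)) (-s) with h | h
    · rw [if_pos h, if_neg (not_le.mpr h)]; ring
    · rw [if_neg (not_lt.mpr h), if_pos h]; ring
  have hae : ∫ θ in (0:ℝ)..(2*π), (if -s ≤ Real.cos (θ - α) then (inner ℝ f (uvec θ) : ℝ) else 0)
      = ∫ θ in (0:ℝ)..(2*π), (if -s < Real.cos (θ - α) then (inner ℝ f (uvec θ) : ℝ) else 0) := by
    refine intervalIntegral.integral_congr_ae ?_
    have hnull : ∀ᵐ x ∂(volume : Measure ℝ), Real.cos (x - α) ≠ -s := by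
      rw [ae_iff]
      convert null_level α (-s) using 2
      simp
    filter_upwards [hnull] with x hx _
    rcases lt_or_ge (-s) (Real.cos (x - α)) with h | h
    · rw [if_pos h.le, if_pos h]
    · rw [if_neg (not_le.mpr (lt_of_le_of_ne h hx)), if_neg (not_lt.mpr (le_of_lt (lt_of_le_of_ne h hx)))]
  rw [intervalIntegral.integral_congr (g := fun θ => (inner ℝ f (uvec θ) : ℝ)
      - (if -s ≤ Real.cos (θ - α) then (inner ℝ f (uvec θ) : ℝ) else 0)) (fun x _ => hpt x),
    intervalIntegral.integral_sub hXint hite_int, integral_inner_uvec, hae, key_integral hs]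
  ring
lemma norcone_est {S : Set V2} {q w : V2} (hw : w ∈ NorCone S q) {ε : ℝ} (hε : 0 < ε) :
    ∃ δ > 0, ∀ p ∈ S, dist p q ≤ δ → (inner ℝ w (p - q) : ℝ) ≤ ε * ‖p - q‖ := by
  by_contra hcon
  push_neg at hcon
  have hchoice : ∀ n : ℕ, ∃ p, p ∈ S ∧ dist p q ≤ 1/(n+1) ∧ ε * ‖p - q‖ < (inner ℝ w (p - q) : ℝ) := by
    intro n
    obtain ⟨p, hpS, hpd, hpi⟩ := hcon (1/(n+1)) (by positivity)
    exact ⟨p, hpS, hpd, hpi⟩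
  choose p hpS hpd hpi using hchoice
  have hne : ∀ n, p n ≠ q := by
    intro n h
    have := hpi n
    rw [h] at this
    simp at this
  have hnormpos : ∀ n, (0:ℝ) < ‖p n - q‖ := fun n =>
    norm_pos_iff.mpr (sub_ne_zero.mpr (hne n))
  set v : ℕ → V2 := fun n => ‖p n - q‖⁻¹ • (p n - q) with hv
  have hv1 : ∀ n, v n ∈ Metric.sphere (0:V2) 1 := by
    intro n
    simp only [hv, mem_sphere_iff_norm, sub_zero, norm_smul, norm_inv, norm_norm]
    rw [inv_mul_cancel₀ (ne_of_gt (hnormpos n))]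
  obtain ⟨a, ha, φ, hφ, hconv⟩ := (isCompact_sphere (0:V2) 1).tendsto_subseq hv1
  have hanorm : ‖a‖ = 1 := by simpa using ha
  have hpq : Filter.Tendsto (p ∘ φ) Filter.atTop (nhds q) := by
    rw [tendsto_iff_dist_tendsto_zero]
    refine squeeze_zero (fun n => dist_nonneg) (fun n => (hpd (φ n)).trans ?_) 
      tendsto_one_div_add_atTop_nhds_zero_nat
    gcongr
    exact_mod_cast hφ.le_apply
  have haT : a ∈ TanCone S q := by
    refine ⟨p ∘ φ, fun n => ⟨hpS (φ n), hne (φ n)⟩, hpq, ?_⟩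
    rw [hanorm]
    simpa [hv, Function.comp_def] using hconv
  have hle := hw a haT
  have hvlow : ∀ n, ε ≤ (inner ℝ w (v n) : ℝ) := by
    intro n
    have h1 : (inner ℝ w (v n) : ℝ) = ‖p n - q‖⁻¹ * (inner ℝ w (p n - q) : ℝ) :=
      real_inner_smul_right w _ _
    rw [h1]
    have h2 : ε * ‖p n - q‖ ≤ (inner ℝ w (p n - q) : ℝ) := (hpi n).le
    calc ε = ‖p n - q‖⁻¹ * (ε * ‖p n - q‖) := by
            rw [mul_comm ε, ← mul_assoc, inv_mul_cancel₀ (ne_of_gt (hnormpos n)), one_mul]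
      _ ≤ ‖p n - q‖⁻¹ * (inner ℝ w (p n - q) : ℝ) :=
            mul_le_mul_of_nonneg_left h2 (inv_nonneg.mpr (norm_nonneg _))
  have hlim : Filter.Tendsto (fun n => (inner ℝ w (v (φ n)) : ℝ)) Filter.atTop
      (nhds (inner ℝ w a : ℝ)) := tendsto_const_nhds.inner hconv
  have : ε ≤ (inner ℝ w a : ℝ) := ge_of_tendsto' hlim fun n => hvlow (φ n)
  linarith
lemma continuous_uvec : Continuous uvec := by
  have : uvec = fun θ => Real.cos θ • (!₂[1,0] : V2) + Real.sin θ • (!₂[0,1] : V2) := by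
    funext θ; ext i; fin_cases i <;> simp [uvec]
  rw [this]
  exact (Real.continuous_cos.smul continuous_const).add (Real.continuous_sin.smul continuous_const)

open Real in
lemma tendsto_circle_integral
    (A : Set V2) (i : ℕ) (hi : i = 1 ∨ i = 2) (hAclosed : IsClosed A)
    (q : V2) (hq : q ∈ frontier A) (u : V2) (α : ℝ) (hu : u = uvec α)
    (hestA : ∀ ε > 0, ∃ δ > 0, ∀ p ∈ A, dist p q ≤ δ → (inner ℝ u (p - q) : ℝ) ≤ ε * ‖p - q‖)
    (hestA' : ∀ ε > 0, ∃ δ > 0, ∀ p ∈ closure Aᶜ, dist p q ≤ δ →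
      -(ε * ‖p - q‖) ≤ (inner ℝ u (p - q) : ℝ))
    (r₀ : ℝ) (hr₀ : 0 < r₀) (F : V2 → V2) (hFmeas : Measurable F)
    (hFcont : ContinuousOn F (Bset A i ∩ Metric.cthickening r₀ (frontier A)))
    (s : ℝ) (hs : s ∈ Set.Icc (-1:ℝ) 1) :
    Filter.Tendsto (fun r : ℝ => ∫ θ in (0:ℝ)..(2*π),
        (Bset A i).indicator (fun y => (inner ℝ (F y) (uvec θ) : ℝ)) (q + (r*s) • u + r • uvec θ))
      (nhdsWithin 0 (Set.Ioi 0))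
      (nhds (∫ θ in (0:ℝ)..(2*π),
        (if 0 < (-1:ℝ)^i * (s + Real.cos (θ - α)) then (inner ℝ (F q) (uvec θ) : ℝ) else 0))) := by
  classical
  have hqA : q ∈ A := by
    have := frontier_subset_closure (s := A) hq
    rwa [hAclosed.closure_eq] at this
  have hqA' : q ∈ closure Aᶜ := by
    rw [frontier_eq_closure_inter_closure] at hq; exact hq.2
  have hBclosed : IsClosed (Bset A i) := by
    rcases hi with h | h <;> subst h <;> simp [Bset, hAclosed, isClosed_closure]
  have hB2 : Bset A 2 = closure Aᶜ := by simp [Bset]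
  have hB1 : Bset A 1 = A := by simp [Bset]
  have hqB : q ∈ Bset A i := by
    rcases hi with h | h <;> subst h
    · rw [hB1]; exact hqA
    · rw [hB2]; exact hqA'
  have hqcth : q ∈ Metric.cthickening r₀ (frontier A) := Metric.self_subset_cthickening _ hq
  have hs' : |s| ≤ 1 := abs_le.mpr ⟨hs.1, hs.2⟩
  set x : ℝ → ℝ → V2 := fun r θ => q + (r*s) • u + r • uvec θ with hxdef
  have hxsub : ∀ r θ, x r θ - q = (r*s) • u + r • uvec θ := by
    intro r θ; simp only [hxdef]; abel
  have hxdist : ∀ r θ, 0 ≤ r → dist (x r θ) q ≤ 2*r := by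
    intro r θ hr
    rw [dist_eq_norm, hxsub]
    calc ‖(r*s) • u + r • uvec θ‖ ≤ ‖(r*s) • u‖ + ‖r • uvec θ‖ := norm_add_le _ _
      _ = |r| * |s| * ‖u‖ + |r| * ‖uvec θ‖ := by
          rw [norm_smul, norm_smul, Real.norm_eq_abs, Real.norm_eq_abs, abs_mul]
      _ = r * |s| + r := by rw [hu, uvec_norm, uvec_norm, abs_of_nonneg hr]; ring
      _ ≤ 2*r := by nlinarith
  have hxinner : ∀ r θ, (inner ℝ u (x r θ - q) : ℝ) = r * (s + Real.cos (θ - α)) := by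
    intro r θ
    rw [hxsub, inner_add_right, real_inner_smul_right, real_inner_smul_right, hu,
      inner_uvec_uvec, inner_uvec_uvec]
    rw [sub_self, Real.cos_zero]
    ring
  have hxcont : ∀ r : ℝ, Continuous fun θ => x r θ := by
    intro r
    exact (continuous_const.add (continuous_uvec.const_smul r)).comp' continuous_id |>.congr
      (fun θ => rfl) |>.comp continuous_id
  -- compactness bound
  set K := (Bset A i ∩ Metric.cthickening r₀ (frontier A)) ∩ Metric.closedBall q r₀ with hK
  have hKcompact : IsCompact K :=
    Metric.isCompact_of_isClosed_isBounded
      (((hBclosed.inter (Metric.isClosed_cthickening)).inter Metric.isClosed_closedBall))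
      (Metric.isBounded_closedBall.subset (Set.inter_subset_right))
  have hFK : ContinuousOn F K := hFcont.mono (fun y hy => hy.1)
  obtain ⟨M, hM⟩ := hKcompact.exists_bound_of_continuousOn hFK
  have hM0 : 0 ≤ M :=
    le_trans (norm_nonneg (F q)) (hM q ⟨⟨hqB, hqcth⟩, Metric.mem_closedBall_self hr₀.le⟩)
  -- apply dominated convergence
  apply intervalIntegral.tendsto_integral_filter_of_dominated_convergence (bound := fun _ => M)
  · -- measurability
    refine Filter.Eventually.of_forall fun r => ?_
    have : (fun θ => (Bset A i).indicator (fun y => (inner ℝ (F y) (uvec θ) : ℝ)) (x r θ))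
        = fun θ => if x r θ ∈ Bset A i then (inner ℝ (F (x r θ)) (uvec θ) : ℝ) else 0 := by
      funext θ; rw [Set.indicator_apply]
    rw [this]
    refine Measurable.aestronglyMeasurable ?_
    refine Measurable.ite ?_ ?_ measurable_const
    · exact (hxcont r).measurable hBclosed.measurableSet
    · exact (hFmeas.comp (hxcont r).measurable).inner continuous_uvec.measurable
  · -- bound
    have hmem : Set.Ioo (0:ℝ) (r₀/2) ∈ nhdsWithin (0:ℝ) (Set.Ioi 0) :=
      Ioo_mem_nhdsGT_of_mem ⟨le_refl 0, half_pos hr₀⟩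
    filter_upwards [hmem] with r hr
    refine MeasureTheory.ae_of_all _ fun θ _ => ?_
    by_cases hxB : x r θ ∈ Bset A i
    · rw [Set.indicator_of_mem hxB]
      have hdist : dist (x r θ) q ≤ r₀ := by
        have := hxdist r θ hr.1.le
        linarith [hr.2]
      have hxK : x r θ ∈ K :=
        ⟨⟨hxB, Metric.mem_cthickening_of_dist_le _ _ _ _ hq hdist⟩,
          Metric.mem_closedBall.mpr hdist⟩
      calc ‖(inner ℝ (F (x r θ)) (uvec θ) : ℝ)‖ = |(inner ℝ (F (x r θ)) (uvec θ) : ℝ)| := rfl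
        _ ≤ ‖F (x r θ)‖ * ‖uvec θ‖ := abs_real_inner_le_norm _ _
        _ = ‖F (x r θ)‖ := by rw [uvec_norm, mul_one]
        _ ≤ M := hM _ hxK
    · rw [Set.indicator_of_notMem hxB]; simpa using hM0
  · exact intervalIntegrable_const
  · -- a.e. pointwise convergence
    have hnull : ∀ᵐ θ ∂(volume : Measure ℝ), Real.cos (θ - α) ≠ -s := by
      rw [MeasureTheory.ae_iff]
      convert null_level α (-s) using 2
      simp
    filter_upwards [hnull] with θ hθ _
    have hsc : s + Real.cos (θ - α) ≠ 0 := fun h => hθ (by linarith)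
    have hxtend : Filter.Tendsto (fun r => x r θ) (nhdsWithin 0 (Set.Ioi 0)) (nhds q) := by
      have hc : Continuous fun r : ℝ => x r θ := by
        simp only [hxdef]
        exact (continuous_const.add (((continuous_id.mul continuous_const).smul
          continuous_const))).add (continuous_id.smul continuous_const)
      have h0 : x 0 θ = q := by simp [hxdef]
      have ht := hc.tendsto 0
      rw [h0] at ht
      exact ht.mono_left nhdsWithin_le_nhds
    have hevcth : ∀ᶠ r in nhdsWithin 0 (Set.Ioi 0), x r θ ∈ Metric.cthickening r₀ (frontier A) := by
      filter_upwards [Ioo_mem_nhdsGT_of_mem ⟨le_refl (0:ℝ), half_pos hr₀⟩] with r hr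
      exact Metric.mem_cthickening_of_dist_le _ _ _ _ hq
        (by linarith [hxdist r θ hr.1.le, hr.2])
    rcases lt_trichotomy (s + Real.cos (θ - α)) 0 with hneg | hzero | hpos
    · obtain ⟨δ, hδpos, hδ⟩ := hestA' (-(s + Real.cos (θ - α))/4) (by linarith)
      have hev : ∀ᶠ r in nhdsWithin 0 (Set.Ioi 0), x r θ ∈ interior A := by
        filter_upwards [Ioo_mem_nhdsGT_of_mem ⟨le_refl (0:ℝ), half_pos hδpos⟩] with r hr
        have hrpos : 0 < r := hr.1
        by_contra hnotint
        have hxcl : x r θ ∈ closure Aᶜ := by rw [closure_compl]; exact hnotint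
        have h1 := hδ _ hxcl (by linarith [hxdist r θ hrpos.le, hr.2])
        rw [hxinner] at h1
        have h2 : ‖x r θ - q‖ ≤ 2*r := by rw [← dist_eq_norm]; exact hxdist r θ hrpos.le
        have h3 : 0 ≤ ‖x r θ - q‖ := norm_nonneg _
        nlinarith
      rcases hi with h1 | h2
      · subst h1
        rw [if_pos (show (0:ℝ) < (-1:ℝ)^1 * (s + Real.cos (θ - α)) by rw [pow_one]; nlinarith)]
        have hFtend : Filter.Tendsto (fun r => F (x r θ)) (nhdsWithin 0 (Set.Ioi 0))
            (nhds (F q)) := by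
          refine (hFcont q ⟨hqB, hqcth⟩).tendsto.comp ?_
          rw [tendsto_nhdsWithin_iff]
          refine ⟨hxtend, ?_⟩
          filter_upwards [hev, hevcth] with r hr1 hr2
          exact ⟨by rw [hB1]; exact interior_subset hr1, hr2⟩
        refine Filter.Tendsto.congr' ?_ (hFtend.inner tendsto_const_nhds)
        filter_upwards [hev] with r hr
        have hrB : x r θ ∈ Bset A 1 := by rw [hB1]; exact interior_subset hr
        exact (Set.indicator_of_mem hrB (fun y => (inner ℝ (F y) (uvec θ) : ℝ))).symm
      · subst h2
        rw [if_neg (show ¬ (0:ℝ) < (-1:ℝ)^2 * (s + Real.cos (θ - α)) by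
          rw [show ((-1:ℝ)^2) = 1 by norm_num]; push_neg; nlinarith)]
        refine Filter.Tendsto.congr' ?_ tendsto_const_nhds
        filter_upwards [hev] with r hr
        have hxnot : x r θ ∉ Bset A 2 := by
          rw [hB2, closure_compl]
          simpa using hr
        exact (Set.indicator_of_notMem hxnot (fun y => (inner ℝ (F y) (uvec θ) : ℝ))).symm
    · exact absurd hzero hsc
    · obtain ⟨δ, hδpos, hδ⟩ := hestA ((s + Real.cos (θ - α))/4) (by linarith)
      have hev : ∀ᶠ r in nhdsWithin 0 (Set.Ioi 0), x r θ ∉ A := by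
        filter_upwards [Ioo_mem_nhdsGT_of_mem ⟨le_refl (0:ℝ), half_pos hδpos⟩] with r hr
        have hrpos : 0 < r := hr.1
        intro hmem
        have h1 := hδ _ hmem (by linarith [hxdist r θ hrpos.le, hr.2])
        rw [hxinner] at h1
        have h2 : ‖x r θ - q‖ ≤ 2*r := by rw [← dist_eq_norm]; exact hxdist r θ hrpos.le
        have h3 : 0 ≤ ‖x r θ - q‖ := norm_nonneg _
        nlinarith
      rcases hi with h1 | h2
      · subst h1
        rw [if_neg (show ¬ (0:ℝ) < (-1:ℝ)^1 * (s + Real.cos (θ - α)) by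
          rw [pow_one]; push_neg; nlinarith)]
        refine Filter.Tendsto.congr' ?_ tendsto_const_nhds
        filter_upwards [hev] with r hr
        have hxnot : x r θ ∉ Bset A 1 := by rw [hB1]; exact hr
        exact (Set.indicator_of_notMem hxnot (fun y => (inner ℝ (F y) (uvec θ) : ℝ))).symm
      · subst h2
        rw [if_pos (show (0:ℝ) < (-1:ℝ)^2 * (s + Real.cos (θ - α)) by
          rw [show ((-1:ℝ)^2) = 1 by norm_num]; nlinarith)]
        have hevB : ∀ᶠ r in nhdsWithin 0 (Set.Ioi 0), x r θ ∈ Bset A 2 := by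
          filter_upwards [hev] with r hr
          rw [hB2]
          exact subset_closure hr
        have hFtend : Filter.Tendsto (fun r => F (x r θ)) (nhdsWithin 0 (Set.Ioi 0))
            (nhds (F q)) := by
          refine (hFcont q ⟨hqB, hqcth⟩).tendsto.comp ?_
          rw [tendsto_nhdsWithin_iff]
          refine ⟨hxtend, ?_⟩
          filter_upwards [hevB, hevcth] with r hr1 hr2
          exact ⟨hr1, hr2⟩
        refine Filter.Tendsto.congr' ?_ (hFtend.inner tendsto_const_nhds)
        filter_upwards [hevB] with r hr
        exact (Set.indicator_of_mem hr (fun y => (inner ℝ (F y) (uvec θ) : ℝ))).symm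

/-- Pointwise limit of the normalized circle flux at `H¹`-a.e.
boundary point. -/
theorem circle_flux_limit
    (A : Set V2) (uA : V2 → V2) (hA : IsJordanDomain A) (hreg : LipschitzRegular A uA)
    (i : ℕ) (hi : i = 1 ∨ i = 2) (r₀ : ℝ) (hr₀ : 0 < r₀) (F : V2 → V2)
    (hFmeas : Measurable F)
    (hFcont : ContinuousOn F (Bset A i ∩ Metric.cthickening r₀ (frontier A))) :
    ∃ N : Set V2, μH[1] N = 0 ∧ ∀ q ∈ frontier A, q ∉ N → ∀ s ∈ Set.Icc (-1:ℝ) 1,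
      Tendsto (fun r : ℝ => r⁻¹ * GD A uA F i r s q) (nhdsWithin 0 (Set.Ioi 0))
        (nhds ((-1:ℝ)^i * (2 * Real.sqrt (1 - s^2)) * (inner ℝ (F q) (uA q) : ℝ))) := by
  classical
  refine ⟨{q | q ∈ frontier A ∧ ¬ RegularAt A uA q}, hreg.2.2, ?_⟩
  intro q hq hqN s hs
  have hregq : RegularAt A uA q := by
    by_contra h
    exact hqN ⟨hq, h⟩
  obtain ⟨hnorm, htan, hNA, hNA'⟩ := hregq
  obtain ⟨α, hα⟩ := unit_eq_uvec hnorm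
  have hAclosed : IsClosed A := hA.1.isClosed
  have hu_mem : uA q ∈ NorCone A q := by
    rw [hNA]; exact ⟨1, zero_le_one, (one_smul ℝ _).symm⟩
  have hu'_mem : -uA q ∈ NorCone (closure Aᶜ) q := by
    rw [hNA']; exact ⟨1, zero_le_one, by rw [one_smul]⟩
  have hestA : ∀ ε > 0, ∃ δ > 0, ∀ p ∈ A, dist p q ≤ δ →
      (inner ℝ (uA q) (p - q) : ℝ) ≤ ε * ‖p - q‖ :=
    fun ε hε => norcone_est hu_mem hε
  have hestA' : ∀ ε > 0, ∃ δ > 0, ∀ p ∈ closure Aᶜ, dist p q ≤ δ →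
      -(ε * ‖p - q‖) ≤ (inner ℝ (uA q) (p - q) : ℝ) := by
    intro ε hε
    obtain ⟨δ, hδpos, h⟩ := norcone_est hu'_mem hε
    refine ⟨δ, hδpos, fun p hp hd => ?_⟩
    have := h p hp hd
    rw [inner_neg_left] at this
    linarith
  have hmain := tendsto_circle_integral A i hi hAclosed q hq (uA q) α hα hestA hestA'
    r₀ hr₀ F hFmeas hFcont s hs
  have hlimval : ∫ θ in (0:ℝ)..(2*Real.pi),
      (if 0 < (-1:ℝ)^i * (s + Real.cos (θ - α)) then (inner ℝ (F q) (uvec θ) : ℝ) else 0)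
      = (-1:ℝ)^i * (2 * Real.sqrt (1 - s^2)) * (inner ℝ (F q) (uA q) : ℝ) := by
    rcases hi with h1 | h2
    · subst h1
      have heq : ∀ θ : ℝ, (if 0 < (-1:ℝ)^1 * (s + Real.cos (θ - α))
          then (inner ℝ (F q) (uvec θ) : ℝ) else 0)
          = (if Real.cos (θ - α) < -s then (inner ℝ (F q) (uvec θ) : ℝ) else 0) := by
        intro θ
        refine if_congr ?_ rfl rfl
        rw [pow_one]
        constructor <;> intro h <;> nlinarith
      rw [intervalIntegral.integral_congr (fun θ _ => heq θ), key_integral' hs α (F q), ← hα]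
      rw [pow_one]; ring
    · subst h2
      have heq : ∀ θ : ℝ, (if 0 < (-1:ℝ)^2 * (s + Real.cos (θ - α))
          then (inner ℝ (F q) (uvec θ) : ℝ) else 0)
          = (if -s < Real.cos (θ - α) then (inner ℝ (F q) (uvec θ) : ℝ) else 0) := by
        intro θ
        refine if_congr ?_ rfl rfl
        rw [show ((-1:ℝ)^2) = 1 by norm_num]
        constructor <;> intro h <;> nlinarith
      rw [intervalIntegral.integral_congr (fun θ _ => heq θ), key_integral hs α (F q), ← hα]
      rw [show ((-1:ℝ)^2) = 1 by norm_num]; ring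
  rw [hlimval] at hmain
  refine Filter.Tendsto.congr' ?_ hmain
  filter_upwards [self_mem_nhdsWithin] with r hr
  have hrne : (r : ℝ) ≠ 0 := ne_of_gt hr
  show _ = r⁻¹ * GD A uA F i r s q
  rw [GD, ← mul_assoc, inv_mul_cancel₀ hrne, one_mul]
end

section
/- Let R ⊆ ℝ² be a compact convex set with nonempty interior whose boundary ∂R is strictly convex, i.e. ∂R contains no nondegenerate line segment. Then for any two distinct points p₁ ≠ p₂ in ℝ², the translated boundaries intersect in a set of 1-dimensional Hausdorff measure zero: H¹((∂R + p₁) ∩ (∂R + p₂)) = 0. -/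
open MeasureTheory Set

/-- Supporting-line lemma: if `q` is a frontier point of a compact convex body `R`
lying in the open segment between two points of `R`, then the whole segment lies
in the frontier. -/
lemma aux_seg_frontier {R : Set V2} (hcomp : IsCompact R) (hconv : Convex ℝ R)
    (hint : (interior R).Nonempty) {p r q : V2} (hp : p ∈ R) (hr : r ∈ R)
    (hq : q ∈ frontier R) (hmem : q ∈ openSegment ℝ p r) :
    segment ℝ p r ⊆ frontier R := by
  have hclosed : IsClosed R := hcomp.isClosed
  have hfr : frontier R = R \ interior R := hclosed.frontier_eq
  have hqR : q ∈ R := (hfr ▸ hq).1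
  have hqi : q ∉ interior R := (hfr ▸ hq).2
  obtain ⟨f, hf⟩ := geometric_hahn_banach_open_point hconv.interior isOpen_interior hqi
  obtain ⟨x0, hx0⟩ := hint
  -- every point of R satisfies f w ≤ f q
  have key : ∀ w ∈ R, f w ≤ f q := by
    intro w hw
    have hseq : ∀ t ∈ Ioc (0:ℝ) 1, f (t • x0 + (1 - t) • w) < f q := by
      intro t ht
      exact hf _ (hconv.combo_interior_self_mem_interior hx0 hw ht.1
        (by linarith [ht.2]) (by ring))
    have hc : Continuous fun t : ℝ => f (t • x0 + (1 - t) • w) := by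
      fun_prop
    have htend : Filter.Tendsto (fun t : ℝ => f (t • x0 + (1 - t) • w))
        (nhdsWithin 0 (Ioi 0)) (nhds (f w)) := by
      have haux : Filter.Tendsto (fun t : ℝ => f (t • x0 + (1 - t) • w))
          (nhdsWithin (0:ℝ) (Ioi 0)) (nhds (f ((0:ℝ) • x0 + (1 - (0:ℝ)) • w))) :=
        (hc.tendsto 0).mono_left nhdsWithin_le_nhds
      simpa using haux
    refine le_of_tendsto htend ?_
    filter_upwards [Ioc_mem_nhdsGT_of_mem (by constructor <;> norm_num : (0:ℝ) ∈ Ico 0 1)]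
      with t ht using (hseq t ht).le
  obtain ⟨μ, ν, hμ, hν, hμν, hcomb⟩ := hmem
  have hfp : f p ≤ f q := key p hp
  have hfr' : f r ≤ f q := key r hr
  have hcombf : μ * f p + ν * f r = f q := by
    rw [← hcomb]; simp [_root_.map_add, _root_.map_smul]
  have hmix : μ * f q + ν * f q = f q := by rw [← add_mul, hμν, one_mul]
  have hfpq : f p = f q := by
    by_contra hne'
    have hlt : μ * f p < μ * f q := mul_lt_mul_of_pos_left (lt_of_le_of_ne hfp hne') hμ
    have h2 : ν * f r ≤ ν * f q := mul_le_mul_of_nonneg_left hfr' hν.le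
    linarith
  have hfrq : f r = f q := by
    by_contra hne'
    have hlt : ν * f r < ν * f q := mul_lt_mul_of_pos_left (lt_of_le_of_ne hfr' hne') hν
    have h2 : μ * f p ≤ μ * f q := mul_le_mul_of_nonneg_left hfp hμ.le
    linarith
  rintro w ⟨s, t, hs, ht, hst, rfl⟩
  have hwR : s • p + t • r ∈ R := hconv hp hr hs ht hst
  have hfw : f (s • p + t • r) = f q := by
    simp only [_root_.map_add, _root_.map_smul, smul_eq_mul, hfpq, hfrq]
    rw [← add_mul, hst, one_mul]
  rw [hfr]
  refine ⟨hwR, fun hwint => ?_⟩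
  exact absurd hfw (ne_of_lt (hf _ hwint))

/-- Kernel lemma for the perpendicular functional. -/
lemma aux_ker {v u : V2} (hv : v ≠ 0)
    (h : v 0 * u 1 - v 1 * u 0 = 0) : ∃ t : ℝ, u = t • v := by
  by_cases h0 : v 0 ≠ 0
  · refine ⟨u 0 / v 0, ?_⟩
    ext i
    fin_cases i
    · show u 0 = (u 0 / v 0) • v 0
      rw [smul_eq_mul]
      field_simp
    · show u 1 = (u 0 / v 0) • v 1
      rw [smul_eq_mul]
      field_simp
      linear_combination h
  · push_neg at h0
    have h1 : v 1 ≠ 0 := by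
      intro h1
      apply hv
      ext i
      fin_cases i
      · show v 0 = 0; exact h0
      · show v 1 = 0; exact h1
    have hu0 : u 0 = 0 := by
      have hz : v 1 * u 0 = 0 := by linear_combination -h + u 1 * h0
      exact (mul_eq_zero.mp hz).resolve_left h1
    refine ⟨u 1 / v 1, ?_⟩
    ext i
    fin_cases i
    · show u 0 = (u 1 / v 1) • v 0
      rw [smul_eq_mul, h0, hu0, mul_zero]
    · show u 1 = (u 1 / v 1) • v 1
      rw [smul_eq_mul]
      field_simp

/-- Chord lemma: if `b` and `b + v` are frontier points of a strictly convex body,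
then points `b + s • v` of `R` must have `s ∈ [0, 1]`. -/
lemma aux_chord {R : Set V2} (hcomp : IsCompact R) (hconv : Convex ℝ R)
    (hint : (interior R).Nonempty)
    (hstrict : ∀ x ∈ frontier R, ∀ y ∈ frontier R, x ≠ y →
      ¬ segment ℝ x y ⊆ frontier R)
    {v : V2} (hv : v ≠ 0) {b : V2} (hb : b ∈ frontier R) (hbv : b + v ∈ frontier R)
    {s : ℝ} (hs : b + s • v ∈ R) : 0 ≤ s ∧ s ≤ 1 := by
  have hFR : frontier R ⊆ R := hcomp.isClosed.frontier_subset
  constructor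
  · by_contra hneg
    push_neg at hneg
    have hmem : b ∈ openSegment ℝ (b + s • v) (b + v) := by
      have h1s : (1:ℝ) - s ≠ 0 := by linarith
      refine ⟨1 / (1 - s), -s / (1 - s), div_pos one_pos (by linarith),
        div_pos (by linarith) (by linarith),
        by rw [← add_div, div_eq_one_iff_eq h1s]; ring, ?_⟩
      rw [smul_add, smul_add, smul_smul]
      ext i
      simp only [PiLp.add_apply, PiLp.smul_apply, smul_eq_mul]
      field_simp
      ring
    have hseg := aux_seg_frontier hcomp hconv hint hs (hFR hbv) hb hmem
    have hne : b + s • v ≠ b + v := by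
      intro h
      have : s • v = v := by
        have := add_left_cancel h
        exact this
      have : (s - 1) • v = 0 := by rw [sub_smul, one_smul, this, sub_self]
      rcases smul_eq_zero.mp this with h' | h'
      · linarith [sub_eq_zero.mp (by linarith : s - 1 = 0)]
      · exact hv h'
    exact hstrict _ (hseg (left_mem_segment ℝ _ _)) _ (hseg (right_mem_segment ℝ _ _)) hne hseg
  · by_contra hgt
    push_neg at hgt
    have hs0 : s ≠ 0 := by linarith
    have hmem : b + v ∈ openSegment ℝ b (b + s • v) := by
      have hs' : s ≠ 0 := by linarith
      refine ⟨(s - 1) / s, 1 / s, div_pos (by linarith) (by linarith),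
        div_pos one_pos (by linarith),
        by rw [← add_div, div_eq_one_iff_eq hs']; ring, ?_⟩
      rw [smul_add, smul_smul]
      ext i
      simp only [PiLp.add_apply, PiLp.smul_apply, smul_eq_mul]
      field_simp
      ring
    have hseg := aux_seg_frontier hcomp hconv hint (hFR hb) hs hbv hmem
    have hne : b ≠ b + s • v := by
      intro h
      have : s • v = 0 := by
        have := add_left_cancel (by rw [add_zero]; exact h : b + 0 = b + s • v)
        exact this.symm
      rcases smul_eq_zero.mp this with h' | h'
      · exact hs0 h'
      · exact hv h'
    exact hstrict _ (hseg (left_mem_segment ℝ _ _)) _ (hseg (right_mem_segment ℝ _ _)) hne hseg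

/-- The "middle point" contradiction. -/
lemma aux_middle {R : Set V2} (hcomp : IsCompact R) (hconv : Convex ℝ R)
    (hint : (interior R).Nonempty)
    (hstrict : ∀ x ∈ frontier R, ∀ y ∈ frontier R, x ≠ y →
      ¬ segment ℝ x y ⊆ frontier R)
    {v : V2} (hv : v ≠ 0) {a b c : V2}
    (haF : a ∈ frontier R) (havF : a + v ∈ frontier R)
    (hbF : b ∈ frontier R) (hbvF : b + v ∈ frontier R)
    (hcF : c ∈ frontier R) (hcvF : c + v ∈ frontier R)
    (h1 : v 0 * a 1 - v 1 * a 0 < v 0 * b 1 - v 1 * b 0)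
    (h2 : v 0 * b 1 - v 1 * b 0 < v 0 * c 1 - v 1 * c 0) : False := by
  have hFR : frontier R ⊆ R := hcomp.isClosed.frontier_subset
  set A := v 0 * a 1 - v 1 * a 0 with hA
  set B := v 0 * b 1 - v 1 * b 0 with hB
  set C := v 0 * c 1 - v 1 * c 0 with hC
  set lam := (C - B) / (C - A) with hlam
  have hCA : (0:ℝ) < C - A := by linarith
  have hlam0 : 0 < lam := div_pos (by linarith) hCA
  have hlam1 : lam < 1 := by
    rw [hlam, div_lt_one hCA]; linarith
  set b' := lam • a + (1 - lam) • c with hb'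
  have hb'R : b' ∈ R := hconv (hFR haF) (hFR hcF) hlam0.le (by linarith) (by ring)
  have hb'vR : b' + v ∈ R := by
    have heq : b' + v = lam • (a + v) + (1 - lam) • (c + v) := by
      rw [hb', smul_add, smul_add]
      ext i
      simp only [PiLp.add_apply, PiLp.smul_apply, smul_eq_mul]
      ring
    rw [heq]
    exact hconv (hFR havF) (hFR hcvF) hlam0.le (by linarith) (by ring)
  -- φ b' = φ b
  have hphi : v 0 * (b' 1) - v 1 * (b' 0) = B := by
    have e0 : b' 0 = lam * a 0 + (1 - lam) * c 0 := by
      simp [hb', PiLp.add_apply, PiLp.smul_apply]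
    have e1 : b' 1 = lam * a 1 + (1 - lam) * c 1 := by
      simp [hb', PiLp.add_apply, PiLp.smul_apply]
    have : v 0 * (b' 1) - v 1 * (b' 0) = lam * A + (1 - lam) * C := by
      rw [e0, e1, hA, hC]; ring
    rw [this, hlam]
    field_simp
    ring
  -- b' = b + t • v for some t
  obtain ⟨t, ht⟩ := aux_ker hv (u := b' - b) (by
    simp only [PiLp.sub_apply]
    rw [hB] at hphi
    ring_nf
    ring_nf at hphi
    linarith)
  have hb'eq : b' = b + t • v := by
    rw [← ht]; abel
  have ht01 := aux_chord hcomp hconv hint hstrict hv hbF hbvF (s := t) (hb'eq ▸ hb'R)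
  have ht1 : t + 1 ≤ 1 := by
    have hmem : b + (t + 1) • v ∈ R := by
      have : b + (t + 1) • v = b' + v := by
        rw [hb'eq, add_smul, one_smul]; abel
      rw [this]; exact hb'vR
    exact (aux_chord hcomp hconv hint hstrict hv hbF hbvF hmem).2
  have ht0 : t = 0 := le_antisymm (by linarith) ht01.1
  have hbb' : b' = b := by rw [hb'eq, ht0, zero_smul, add_zero]
  have hmemseg : b ∈ openSegment ℝ a c :=
    ⟨lam, 1 - lam, hlam0, by linarith, by ring, by rw [← hb', hbb']⟩
  have hac : a ≠ c := by
    intro h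
    have hACeq : A = C := by rw [hA, hC, h]
    linarith
  have hseg := aux_seg_frontier hcomp hconv hint (hFR haF) (hFR hcF) hbF hmemseg
  exact hstrict a haF c hcF hac hseg

/-- If `R ⊆ ℝ²` is a compact convex body whose boundary contains no
nondegenerate line segment, then any two distinct translates of its boundary meet in
an `H¹`-null set. -/
theorem strictly_convex_boundary_translates_null
    (R : Set V2) (hcomp : IsCompact R) (hconv : Convex ℝ R)
    (hint : (interior R).Nonempty)
    (hstrict : ∀ x ∈ frontier R, ∀ y ∈ frontier R, x ≠ y →
      ¬ segment ℝ x y ⊆ frontier R)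
    (p₁ p₂ : V2) (hne : p₁ ≠ p₂) :
    μH[1] (((· + p₁) '' frontier R) ∩ ((· + p₂) '' frontier R)) = 0 := by
  haveI : NullSingletonClass (μH[1] : Measure V2) := Measure.nullSingletonClass_hausdorff V2 one_pos
  set v := p₁ - p₂ with hvdef
  have hv : v ≠ 0 := sub_ne_zero.mpr hne
  have hFR : frontier R ⊆ R := hcomp.isClosed.frontier_subset
  set T := ((· + p₁) '' frontier R) ∩ ((· + p₂) '' frontier R) with hT
  -- every point of T gives a point y ∈ frontier with y + v ∈ frontier
  have hmemT : ∀ x ∈ T, (x - p₁ ∈ frontier R) ∧ ((x - p₁) + v ∈ frontier R) := by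
    rintro x ⟨⟨a, ha, hax⟩, ⟨b, hb, hbx⟩⟩
    have hax' : a + p₁ = x := hax
    have hbx' : b + p₂ = x := hbx
    have h1 : x - p₁ = a := by rw [← hax']; abel
    have hb2 : b = x - p₂ := by rw [← hbx']; abel
    have h2 : x - p₁ + v = b := by rw [hvdef, hb2]; abel
    exact ⟨by rw [h1]; exact ha, by rw [h2]; exact hb⟩
  -- injectivity of the functional on such points
  have inj : ∀ d e : V2, d ∈ frontier R → d + v ∈ frontier R →
      e ∈ frontier R → e + v ∈ frontier R →
      v 0 * d 1 - v 1 * d 0 = v 0 * e 1 - v 1 * e 0 → d = e := by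
    intro d e hd hdv he hev hphi
    obtain ⟨t, ht⟩ := aux_ker hv (u := d - e) (by
      simp only [PiLp.sub_apply]; linarith [hphi])
    have hdeq : d = e + t • v := by rw [← ht]; abel
    have h1 := aux_chord hcomp hconv hint hstrict hv he hev (s := t) (hdeq ▸ hFR hd)
    have h2 : t + 1 ≤ 1 := by
      have : e + (t + 1) • v ∈ R := by
        have heq : e + (t + 1) • v = (d + v) := by
          rw [hdeq, add_smul, one_smul]; abel
        rw [heq]; exact hFR hdv
      exact (aux_chord hcomp hconv hint hstrict hv he hev this).2
    have : t = 0 := le_antisymm (by linarith) h1.1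
    rw [hdeq, this, zero_smul, add_zero]
  -- three points of T cannot be pairwise distinct
  have keyT : ∀ x ∈ T, ∀ y ∈ T, ∀ z ∈ T, x = y ∨ x = z ∨ y = z := by
    intro x hx y hy z hz
    by_contra hcon
    push_neg at hcon
    obtain ⟨hxy, hxz, hyz⟩ := hcon
    obtain ⟨haF, havF⟩ := hmemT x hx
    obtain ⟨hbF, hbvF⟩ := hmemT y hy
    obtain ⟨hcF, hcvF⟩ := hmemT z hz
    set a := x - p₁
    set b := y - p₁
    set c := z - p₁
    have hab : a ≠ b := fun h => hxy (by
      have := congrArg (· + p₁) h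
      simpa [a, b, sub_add_cancel] using this)
    have hac : a ≠ c := fun h => hxz (by
      have := congrArg (· + p₁) h
      simpa [a, c, sub_add_cancel] using this)
    have hbc : b ≠ c := fun h => hyz (by
      have := congrArg (· + p₁) h
      simpa [b, c, sub_add_cancel] using this)
    set A := v 0 * a 1 - v 1 * a 0
    set B := v 0 * b 1 - v 1 * b 0
    set C := v 0 * c 1 - v 1 * c 0
    have hAB : A ≠ B := fun h => hab (inj a b haF havF hbF hbvF h)
    have hAC : A ≠ C := fun h => hac (inj a c haF havF hcF hcvF h)
    have hBC : B ≠ C := fun h => hbc (inj b c hbF hbvF hcF hcvF h)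
    rcases hAB.lt_or_gt with h₁ | h₁ <;> rcases hAC.lt_or_gt with h₂ | h₂ <;>
      rcases hBC.lt_or_gt with h₃ | h₃
    · exact aux_middle hcomp hconv hint hstrict hv haF havF hbF hbvF hcF hcvF h₁ h₃
    · exact aux_middle hcomp hconv hint hstrict hv haF havF hcF hcvF hbF hbvF h₂ h₃
    · linarith
    · exact aux_middle hcomp hconv hint hstrict hv hcF hcvF haF havF hbF hbvF h₂ h₁
    · exact aux_middle hcomp hconv hint hstrict hv hbF hbvF haF havF hcF hcvF h₁ h₂
    · linarith
    · exact aux_middle hcomp hconv hint hstrict hv hbF hbvF hcF hcvF haF havF h₃ h₂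
    · exact aux_middle hcomp hconv hint hstrict hv hcF hcvF hbF hbvF haF havF h₃ h₁
  -- conclude: T has at most two points
  rcases eq_empty_or_nonempty T with hTe | ⟨x, hx⟩
  · rw [hTe]; exact measure_empty
  · by_cases hsub : ∀ y ∈ T, y = x
    · exact measure_mono_null (fun y hy => hsub y hy) (measure_singleton x)
    · push_neg at hsub
      obtain ⟨y, hy, hyx⟩ := hsub
      have hsub2 : T ⊆ {x, y} := by
        intro z hz
        rcases keyT z hz x hx y hy with h | h | h
        · exact Or.inl h
        · exact Or.inr h
        · exact absurd h.symm hyx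
      refine measure_mono_null hsub2 ?_
      rw [Set.insert_eq]
      exact measure_union_null (measure_singleton x) (measure_singleton y)
end
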